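/- Let a : ℕ → ℚ satisfy a(0)=1, a(1)=-1, a(2)=A with A ≤ 0, and a(n) = -(1/2)·∑_{k=0}^{n-1} a(k)·C(n,k)·2^{n-k} for n ≥ 3. Define c(j,d) = ∑_{k=j}^{d} 2^{-k}·C(d-j,d-k)·a(k). Then for every m ≥ 1: 0 = c(0,4m) ≤ c(1,4m) ≤ ⋯ ≤ c(2m,4m), i.e., the sequence j ↦ c(j,4m) is nonnegative and nondecreasing for 0 ≤ j ≤ 2m, with c(0,4m)=0. -/

import Mathlib

theorem stmt_4 (A : ℚ) (hA : A ≤ 0) (a : ℕ → ℚ)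
    (h0 : a 0 = 1) (h1 : a 1 = -1) (h2 : a 2 = A)
    (hrec : ∀ n, 3 ≤ n →
      2 * a n = -∑ k ∈ Finset.range n, a k * (n.choose k : ℚ) * 2 ^ (n - k))
    (c : ℕ → ℕ → ℚ)
    (hc : ∀ j d, c j d = ∑ k ∈ Finset.Icc j d,
      ((d - j).choose (d - k) : ℚ) * a k / 2 ^ k) :
    ∀ m, 1 ≤ m →
      c 0 (4 * m) = 0 ∧
      (∀ j, j ≤ 2 * m → 0 ≤ c j (4 * m)) ∧
      (∀ j, j + 1 ≤ 2 * m → c j (4 * m) ≤ c (j + 1) (4 * m)) := by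
  -- Pascal recurrence for the triangle c
  have hF1 : ∀ d j, j ≤ d → c (j+1) (d+1) = c j (d+1) - c j d := by
    intro d j hj
    rw [hc, hc, hc]
    rw [Finset.sum_Icc_succ_top (by omega : j ≤ d+1), Finset.sum_Icc_succ_top (by omega : j+1 ≤ d+1)]
    rw [show Finset.Icc (j+1) d = Finset.Ioc j d from Finset.Icc_add_one_left_eq_Ioc j d,
        Finset.Icc_eq_cons_Ioc hj, Finset.sum_cons, Finset.sum_cons]
    have key : ∑ k ∈ Finset.Ioc j d, ((d+1-(j+1)).choose (d+1-k) : ℚ) * a k / 2^k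
        = ∑ k ∈ Finset.Ioc j d, (((d+1-j).choose (d+1-k) : ℚ) * a k / 2^k
          - ((d-j).choose (d-k) : ℚ) * a k / 2^k) := by
      apply Finset.sum_congr rfl
      intro k hk
      simp only [Finset.mem_Ioc] at hk
      have e1 : d+1-j = (d-j)+1 := by omega
      have e2 : d+1-k = (d-k)+1 := by omega
      have e3 : d+1-(j+1) = d-j := by omega
      rw [e1, e2, e3, Nat.choose_succ_succ]
      push_cast
      ring
    rw [key, Finset.sum_sub_distrib]
    have e4 : d+1-(d+1) = 0 := by omega
    have e5 : d+1-j = (d-j)+1 := by omega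
    rw [e4, e5]
    simp
    ring
  -- the recursion hrec as a boundary condition
  have hF2 : ∀ d, 3 ≤ d → c d d = -c 0 d := by
    intro d hd
    have hcd : c d d = a d / 2^d := by
      rw [hc, Finset.Icc_self, Finset.sum_singleton]
      simp
    have h2d : (2:ℚ)^d ≠ 0 := by positivity
    have hc0 : c 0 d * 2^d = (∑ k ∈ Finset.range d, a k * (d.choose k : ℚ) * 2 ^ (d - k)) + a d := by
      rw [hc, Finset.sum_mul]
      have hicc : Finset.Icc 0 d = Finset.range (d+1) := by
        ext x; simp [Nat.lt_succ_iff]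
      rw [hicc, Finset.sum_range_succ]
      congr 1
      · apply Finset.sum_congr rfl
        intro k hk
        simp only [Finset.mem_range] at hk
        have e1 : d - 0 = d := by omega
        have e3 : (2:ℚ)^d = 2^k * 2^(d-k) := by
          rw [← pow_add]; congr 1; omega
        rw [e1, Nat.choose_symm (by omega : k ≤ d), e3]
        field_simp
      · simp
    have key : c 0 d * 2^d = -a d := by
      rw [hc0]
      have := hrec d hd
      linarith
    have : c 0 d = -a d / 2^d := by
      field_simp at key ⊢
      linarith
    rw [hcd, this]
    ring
  -- small values
  have hv01 : c 0 1 = 1/2 := by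
    rw [hc]
    simp [show Finset.Icc 0 1 = {0,1} from rfl, h0, h1, Nat.choose]
    norm_num
  have hv11 : c 1 1 = -1/2 := by
    rw [hc]
    simp [show Finset.Icc 1 1 = {1} from rfl, h1]
  have hv02 : c 0 2 = A/4 := by
    rw [hc]
    simp [show Finset.Icc 0 2 = {0,1,2} from rfl, h0, h1, h2, Nat.choose]
    ring
  have hv12 : c 1 2 = A/4 - 1/2 := by
    rw [hc]
    simp [show Finset.Icc 1 2 = {1,2} from rfl, h1, h2, Nat.choose]
    ring
  have hv22 : c 2 2 = A/4 := by
    rw [hc]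
    simp [show Finset.Icc 2 2 = {2} from rfl, h2]
    ring
  -- row sum identity
  have hsum : ∀ d, 2 ≤ d → 2 * c 0 (d+1) = ∑ j ∈ Finset.range (d+1), c j d := by
    intro d hd
    have tele := Finset.sum_range_sub (fun j => c j (d+1)) (d+1)
    have hterm : ∀ i ∈ Finset.range (d+1),
        c (i+1) (d+1) - c i (d+1) = -(c i d) := by
      intro i hi
      simp only [Finset.mem_range] at hi
      rw [hF1 d i (by omega)]
      ring
    rw [Finset.sum_congr rfl hterm, Finset.sum_neg_distrib] at tele
    have := hF2 (d+1) (by omega)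
    linarith
  -- symmetry of rows
  have hsym : ∀ d, ∀ j, j ≤ d → c j d = (-1:ℚ)^d * c (d-j) d := by
    intro d
    induction d with
    | zero =>
      intro j hj
      interval_cases j
      simp
    | succ d ih =>
      rcases Nat.lt_or_ge d 2 with hd | hd
      · interval_cases d
        · intro j hj
          interval_cases j
          · rw [hv01]; simp [hv11]; norm_num
          · rw [hv11]; simp [hv01]; norm_num
        · intro j hj
          interval_cases j
          · rw [hv02]; simp [hv22]
          · rw [hv12]; norm_num
          · rw [hv22]; simp [hv02]
      · -- d ≥ 2, so d+1 ≥ 3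
        have hss : Odd d → ∑ j ∈ Finset.range (d+1), c j d = 0 := by
          intro hodd
          have hneg : (-1:ℚ)^d = -1 := Odd.neg_one_pow hodd
          have h1' : ∑ j ∈ Finset.range (d+1), c j d
              = ∑ j ∈ Finset.range (d+1), -(c (d-j) d) := by
            apply Finset.sum_congr rfl
            intro j hj
            simp only [Finset.mem_range] at hj
            rw [ih j (by omega), hneg]
            ring
          have h2' : ∑ j ∈ Finset.range (d+1), c (d-j) d
              = ∑ j ∈ Finset.range (d+1), c j d := by
            have := Finset.sum_range_reflect (fun j => c j d) (d+1)
            simpa using this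
          rw [h1', Finset.sum_neg_distrib, h2'] at *
          linarith [h1']
        have hbase : c 0 (d+1) = (-1:ℚ)^(d+1) * c (d+1) (d+1) := by
          have hF := hF2 (d+1) (by omega)
          rcases Nat.even_or_odd d with he | ho
          · have : (-1:ℚ)^(d+1) = -1 := Odd.neg_one_pow (Even.add_one he)
            rw [this, hF]; ring
          · have hp : (-1:ℚ)^(d+1) = 1 := Even.neg_one_pow (Odd.add_one ho)
            have hz : c 0 (d+1) = 0 := by
              have := hsum d (by omega)
              rw [hss ho] at this
              linarith
            rw [hp, hF, hz]
            ring
        intro j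
        induction j with
        | zero =>
          intro _
          simpa using hbase
        | succ j ihj =>
          intro hj
          have hjd : j ≤ d := by omega
          have e1 := hF1 d j hjd
          have e2 := ihj (by omega)
          have e3 := hF1 d (d-j) (by omega)
          have e4 := ih j hjd
          have e5 : d + 1 - j = (d-j) + 1 := by omega
          have e6 : d + 1 - (j+1) = d - j := by omega
          rw [e5] at e2
          rw [e3] at e2
          rw [e6, e1, e2, e4, pow_succ]
          ring
  -- odd rows sum to zero
  have hoddsum : ∀ d, Odd d → ∑ j ∈ Finset.range (d+1), c j d = 0 := by
    intro d hodd
    have hneg : (-1:ℚ)^d = -1 := Odd.neg_one_pow hodd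
    have h1' : ∑ j ∈ Finset.range (d+1), c j d
        = ∑ j ∈ Finset.range (d+1), -(c (d-j) d) := by
      apply Finset.sum_congr rfl
      intro j hj
      simp only [Finset.mem_range] at hj
      rw [hsym d j (by omega), hneg]
      ring
    have h2' : ∑ j ∈ Finset.range (d+1), c (d-j) d
        = ∑ j ∈ Finset.range (d+1), c j d := by
      have := Finset.sum_range_reflect (fun j => c j d) (d+1)
      simpa using this
    rw [h1', Finset.sum_neg_distrib, h2'] at *
    linarith [h1']
  -- chaining lemma
  have hchain : ∀ (f : ℕ → ℚ) (N : ℕ), (∀ i, i < N → f i ≤ f (i+1)) →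
      ∀ x y, x ≤ y → y ≤ N → f x ≤ f y := by
    intro f N h x y hxy
    induction y, hxy using Nat.le_induction with
    | base => intro _; exact le_rfl
    | succ y hy ih =>
      intro hyN
      exact le_trans (ih (by omega)) (h y (by omega))
  -- zero at start of rows ≡ 0 mod 4
  have hzero4 : ∀ n : ℕ, c 0 (4*n+4) = 0 := by
    intro n
    have hs := hsum (4*n+3) (by omega)
    rw [show 4*n+3+1 = 4*n+4 from by omega] at hs
    rw [hoddsum (4*n+3) ⟨2*n+1, by ring⟩] at hs
    linarith
  -- nonnegativity of rows ≡ 0 mod 4 (entire row)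
  have hrow4 : ∀ n : ℕ, (∀ j, 2*j ≤ 4*n+3 → c j (4*n+3) ≤ 0) →
      ∀ j, j ≤ 4*n+4 → 0 ≤ c j (4*n+4) := by
    intro n H
    have mono : ∀ i, i < 2*n+2 → c i (4*n+4) ≤ c (i+1) (4*n+4) := by
      intro i hi
      have := hF1 (4*n+3) i (by omega)
      rw [show 4*n+3+1 = 4*n+4 from by omega] at this
      have := H i (by omega)
      linarith [hF1 (4*n+3) i (by omega), H i (by omega)]
    have half : ∀ j, j ≤ 2*n+2 → 0 ≤ c j (4*n+4) := by
      intro j hj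
      have := hchain (fun i => c i (4*n+4)) (2*n+2) mono 0 j (by omega) (by omega)
      rw [hzero4 n] at this
      exact this
    intro j hj
    rcases le_or_gt j (2*n+2) with h | h
    · exact half j h
    · have hs := hsym (4*n+4) j hj
      have hp : (-1:ℚ)^(4*n+4) = 1 := Even.neg_one_pow ⟨2*n+2, by ring⟩
      rw [hp, one_mul] at hs
      rw [hs]
      exact half (4*n+4-j) (by omega)
  -- main sign induction on odd rows ≡ 3 mod 4
  have hP : ∀ n : ℕ, ∀ j, 2*j ≤ 4*n+3 → c j (4*n+3) ≤ 0 := by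
    intro n
    induction n with
    | zero =>
      have hs := hsum 2 (by omega)
      have hsum3 : ∑ j ∈ Finset.range 3, c j 2 = c 0 2 + c 1 2 + c 2 2 := by
        simp [Finset.sum_range_succ]
      rw [hsum3, hv02, hv12, hv22] at hs
      have hc03 : c 0 3 ≤ 0 := by linarith
      have hc13 : c 1 3 ≤ 0 := by
        have := hF1 2 0 (by omega)
        rw [hv02] at this
        linarith
      intro j hj
      have : j ≤ 1 := by omega
      interval_cases j
      · simpa using hc03
      · simpa using hc13
    | succ n ih =>
      -- row e = 4n+4 is nonnegative
      have hA4 := hrow4 n ih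
      -- row 4n+5 : nonneg on first half
      have hc05 : 0 ≤ c 0 (4*n+5) := by
        have hs := hsum (4*n+4) (by omega)
        rw [show 4*n+4+1 = 4*n+5 from by omega] at hs
        have : 0 ≤ ∑ j ∈ Finset.range (4*n+4+1), c j (4*n+4) := by
          apply Finset.sum_nonneg
          intro j hj
          simp only [Finset.mem_range] at hj
          exact hA4 j (by omega)
        linarith
      have mono5 : ∀ i, i < 4*n+4 → c (i+1) (4*n+5) ≤ c i (4*n+5) := by
        intro i hi
        have h := hF1 (4*n+4) i (by omega)
        rw [show 4*n+4+1 = 4*n+5 from by omega] at h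
        have := hA4 i (by omega)
        linarith
      have mid5 : 0 ≤ c (2*n+2) (4*n+5) := by
        have hs := hsym (4*n+5) (2*n+2) (by omega)
        have hp : (-1:ℚ)^(4*n+5) = -1 := Odd.neg_one_pow ⟨2*n+2, by ring⟩
        rw [hp, show 4*n+5-(2*n+2) = 2*n+3 from by omega] at hs
        have := mono5 (2*n+2) (by omega)
        rw [show 2*n+2+1 = 2*n+3 from by omega] at this
        linarith
      have half5 : ∀ j, j ≤ 2*n+2 → 0 ≤ c j (4*n+5) := by
        intro j hj
        have := hchain (fun i => -c i (4*n+5)) (2*n+2)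
          (fun i hi => by linarith [mono5 i (by omega)])
          j (2*n+2) hj (by omega)
        linarith
      -- row 4n+6 : nonpositive everywhere
      have hc06 : c 0 (4*n+6) = 0 := by
        have hs := hsum (4*n+5) (by omega)
        rw [show 4*n+5+1 = 4*n+6 from by omega] at hs
        rw [hoddsum (4*n+5) ⟨2*n+2, by ring⟩] at hs
        linarith
      have mono6 : ∀ i, i < 2*n+3 → c (i+1) (4*n+6) ≤ c i (4*n+6) := by
        intro i hi
        have h := hF1 (4*n+5) i (by omega)
        rw [show 4*n+5+1 = 4*n+6 from by omega] at h
        have := half5 i (by omega)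
        linarith
      have half6 : ∀ j, j ≤ 2*n+3 → c j (4*n+6) ≤ 0 := by
        intro j hj
        have := hchain (fun i => -c i (4*n+6)) (2*n+3)
          (fun i hi => by linarith [mono6 i (by omega)])
          0 j (by omega) hj
        rw [hc06] at this
        linarith
      have hA6 : ∀ j, j ≤ 4*n+6 → c j (4*n+6) ≤ 0 := by
        intro j hj
        rcases le_or_gt j (2*n+3) with h | h
        · exact half6 j h
        · have hs := hsym (4*n+6) j hj
          have hp : (-1:ℚ)^(4*n+6) = 1 := Even.neg_one_pow ⟨2*n+3, by ring⟩
          rw [hp, one_mul] at hs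
          rw [hs]
          exact half6 (4*n+6-j) (by omega)
      -- row 4n+7 : nonpositive on first half
      have hc07 : c 0 (4*n+7) ≤ 0 := by
        have hs := hsum (4*n+6) (by omega)
        rw [show 4*n+6+1 = 4*n+7 from by omega] at hs
        have : ∑ j ∈ Finset.range (4*n+6+1), c j (4*n+6) ≤ 0 := by
          apply Finset.sum_nonpos
          intro j hj
          simp only [Finset.mem_range] at hj
          exact hA6 j (by omega)
        linarith
      have mono7 : ∀ i, i < 4*n+6 → c i (4*n+7) ≤ c (i+1) (4*n+7) := by
        intro i hi
        have h := hF1 (4*n+6) i (by omega)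
        rw [show 4*n+6+1 = 4*n+7 from by omega] at h
        have := hA6 i (by omega)
        linarith
      have mid7 : c (2*n+3) (4*n+7) ≤ 0 := by
        have hs := hsym (4*n+7) (2*n+3) (by omega)
        have hp : (-1:ℚ)^(4*n+7) = -1 := Odd.neg_one_pow ⟨2*n+3, by ring⟩
        rw [hp, show 4*n+7-(2*n+3) = 2*n+4 from by omega] at hs
        have := mono7 (2*n+3) (by omega)
        rw [show 2*n+3+1 = 2*n+4 from by omega] at this
        linarith
      intro j hj
      have hj' : j ≤ 2*n+3 := by omega
      have := hchain (fun i => c i (4*n+7)) (2*n+3) (fun i hi => mono7 i (by omega))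
        j (2*n+3) hj' (by omega)
      rw [show 4*(n+1)+3 = 4*n+7 from by ring]
      linarith
  -- conclusion
  intro m hm
  obtain ⟨n, rfl⟩ : ∃ n, m = n + 1 := ⟨m - 1, by omega⟩
  have e4 : 4 * (n+1) = 4*n+4 := by ring
  have e2 : 2 * (n+1) = 2*n+2 := by ring
  rw [e4, e2]
  refine ⟨hzero4 n, ?_, ?_⟩
  · intro j hj
    exact hrow4 n (hP n) j (by omega)
  · intro j hj
    have h := hF1 (4*n+3) j (by omega)
    rw [show 4*n+3+1 = 4*n+4 from by omega] at h
    have := hP n j (by omega)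
    linarith
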